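/- Each Bell measurement outcome occurs with probability exactly 1/4, independently of the teleported state: let α be a finite type and Ψ : α × Fin 2 → ℂ. Let Φ : α × Fin 2 × Fin 2 × Fin 2 → ℂ be obtained from Ψ ⊗ EPR by applying B† to the pair consisting of the Ψ-qubit and the first EPR qubit. Then for every outcome (m₁, m₂) ∈ Fin 2 × Fin 2, ∑_{a, c} |Φ(a, m₁, m₂, c)|² = (1/4)·∑_{a, c} |Ψ(a, c)|². -/
import Mathlib


open Matrix Kronecker

noncomputable def Hgate : Matrix (Fin 2) (Fin 2) ℂ :=
  ((1 / Real.sqrt 2 : ℝ) : ℂ) • !![1, 1; 1, -1]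

/-- The CNOT gate: `CNOT(|a⟩⊗|b⟩) = |a⟩⊗|a⊕b⟩`. -/
def CNOT : Matrix (Fin 2 × Fin 2) (Fin 2 × Fin 2) ℂ :=
  fun p q => if p = (q.1, q.1 + q.2) then 1 else 0

/-- The Bell gate `B = CNOT * (H ⊗ I₂)`. -/
noncomputable def Bgate : Matrix (Fin 2 × Fin 2) (Fin 2 × Fin 2) ℂ :=
  CNOT * (Hgate ⊗ₖ (1 : Matrix (Fin 2) (Fin 2) ℂ))

/-- `B†`, the conjugate transpose of the Bell gate. -/
noncomputable def Bdag : Matrix (Fin 2 × Fin 2) (Fin 2 × Fin 2) ℂ := Bgateᴴ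

/-- The computational basis state `|a⟩` of one qubit. -/
def ket (a : Fin 2) : Fin 2 → ℂ := fun i => if i = a then 1 else 0

/-- The EPR state `B(|0⟩⊗|0⟩) = (|00⟩+|11⟩)/√2`. -/
noncomputable def EPR : Fin 2 × Fin 2 → ℂ :=
  Bgate.mulVec fun p => ket 0 p.1 * ket 0 p.2

/-- The state obtained from `Ψ ⊗ EPR` (with the EPR pair on fresh qubits `r₁, r₂`)
by applying `B†` to the pair `(q, r₁)` and the identity elsewhere.  Coordinates
are `(a, q, r₁, r₂)`. -/
noncomputable def teleported {α : Type*} [Fintype α] (Ψ : α × Fin 2 → ℂ) :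
    α × Fin 2 × Fin 2 × Fin 2 → ℂ :=
  fun x => ∑ y : Fin 2 × Fin 2,
    Bdag (x.2.1, x.2.2.1) y * (Ψ (x.1, y.1) * EPR (y.2, x.2.2.2))
lemma tele_norm {α : Type*} [Fintype α] (Ψ : α × Fin 2 → ℂ) (a : α) (m₁ m₂ c : Fin 2) :
    ‖teleported Ψ (a, m₁, m₂, c)‖ ^ 2 = (1/4 : ℝ) * ‖Ψ (a, c + m₂)‖ ^ 2 := by
  have h2 : Real.sqrt 2 ^ 2 = 2 := Real.sq_sqrt (by norm_num)
  fin_cases m₁ <;> fin_cases m₂ <;> fin_cases c <;>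
    simp [teleported, Bdag, Bgate, CNOT, Hgate, EPR, ket, Matrix.mul_apply,
      Matrix.mulVec, dotProduct, Fintype.sum_prod_type, Fin.sum_univ_two,
      Matrix.kroneckerMap_apply, Prod.ext_iff, Matrix.one_apply,
      abs_of_nonneg (Real.sqrt_nonneg 2), mul_pow] <;>
    ring
theorem bell_measurement_prob {α : Type*} [Fintype α] (Ψ : α × Fin 2 → ℂ)
    (m₁ m₂ : Fin 2) :
    ∑ a : α, ∑ c : Fin 2, ‖teleported Ψ (a, m₁, m₂, c)‖ ^ 2
      = (1 / 4 : ℝ) * ∑ a : α, ∑ c : Fin 2, ‖Ψ (a, c)‖ ^ 2 := by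
  simp_rw [tele_norm, ← Finset.mul_sum]
  congr 1
  refine Finset.sum_congr rfl fun a _ => ?_
  exact Fintype.sum_equiv (Equiv.addRight m₂) _ _ fun c => rfl
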